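/- Let A be a real n × m matrix, w ∈ ℝ^m a fixed vector, and c : ℝ → ℝ^n a continuous vector-valued function. Suppose that for every t ∈ ℝ the linear program M(t) := inf { wᵀ f : f ∈ ℝ^m, A f ≤ c(t) componentwise } is feasible and its optimal value is finite and attained. Then t ↦ M(t) is a continuous function of t. -/

import Mathlib

open Matrix

private lemma fm_ub {a s g : ℝ} (ha : 0 < a) : a * s + g ≤ 0 ↔ s ≤ -g / a := by
  rw [le_div_iff₀ ha, mul_comm]
  constructor <;> intro h <;> linarith

private lemma fm_lb {a s g : ℝ} (ha : a < 0) : a * s + g ≤ 0 ↔ -g / a ≤ s := by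
  rw [div_le_iff_of_neg ha, mul_comm]
  constructor <;> intro h <;> linarith

/-- One-variable Fourier–Motzkin elimination. -/
private lemma fm_one {Q : Type} [AddCommGroup Q] [Module ℝ Q] {ι : Type} [Fintype ι]
    (a : ι → ℝ) (g : ι → Q →ₗ[ℝ] ℝ) :
    ∃ h : (ι ⊕ ι × ι) → Q →ₗ[ℝ] ℝ,
      ∀ q : Q, (∃ s : ℝ, ∀ k, a k * s + g k q ≤ 0) ↔ (∀ j, h j q ≤ 0) := by
  classical
  refine ⟨Sum.elim (fun k => if a k = 0 then g k else 0)
      (fun kl => if 0 < a kl.1 ∧ a kl.2 < 0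
        then (a kl.1)⁻¹ • g kl.1 - (a kl.2)⁻¹ • g kl.2 else 0), fun q => ?_⟩
  have hval : ∀ k l, 0 < a k → a l < 0 →
      ((a k)⁻¹ • g k - (a l)⁻¹ • g l) q = (-(g l q) / a l) - (-(g k q) / a k) := by
    intro k l hk hl
    simp only [LinearMap.sub_apply, LinearMap.smul_apply, smul_eq_mul]
    field_simp
    ring
  constructor
  · rintro ⟨s, hs⟩ j
    match j with
    | Sum.inl k =>
      simp only [Sum.elim_inl]
      split_ifs with h0
      · have := hs k; rw [h0] at this; linarith
      · simp
    | Sum.inr (k, l) =>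
      simp only [Sum.elim_inr]
      split_ifs with h0
      · obtain ⟨hk, hl⟩ := h0
        rw [hval k l hk hl]
        have h1 := (fm_ub hk).mp (hs k)
        have h2 := (fm_lb hl).mp (hs l)
        linarith
      · simp
  · intro hj
    have hzero : ∀ k, a k = 0 → g k q ≤ 0 := by
      intro k hk
      have := hj (Sum.inl k)
      simpa [hk] using this
    have hcombo : ∀ k l, 0 < a k → a l < 0 → -(g l q) / a l ≤ -(g k q) / a k := by
      intro k l hk hl
      have := hj (Sum.inr (k, l))
      rw [Sum.elim_inr, if_pos (show 0 < a k ∧ a l < 0 from ⟨hk, hl⟩),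
        hval k l hk hl] at this
      linarith
    set Pos := Finset.univ.filter (fun k => 0 < a k) with hPos
    set Neg := Finset.univ.filter (fun k => a k < 0) with hNeg
    have hmemP : ∀ k, k ∈ Pos ↔ 0 < a k := fun k => by rw [hPos]; simp
    have hmemN : ∀ k, k ∈ Neg ↔ a k < 0 := fun k => by rw [hNeg]; simp
    by_cases hP : Pos.Nonempty
    · refine ⟨Pos.inf' hP (fun k => -(g k q) / a k), fun k => ?_⟩
      rcases lt_trichotomy (a k) 0 with hk | hk | hk
      · rw [fm_lb hk]
        refine Finset.le_inf' hP _ (fun k' hk' => ?_)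
        have hk'' : 0 < a k' := (hmemP k').mp hk'
        exact hcombo k' k hk'' hk
      · rw [hk, zero_mul, zero_add]; exact hzero k hk
      · rw [fm_ub hk]
        exact Finset.inf'_le _ ((hmemP k).mpr hk)
    · by_cases hN : Neg.Nonempty
      · refine ⟨Neg.sup' hN (fun k => -(g k q) / a k), fun k => ?_⟩
        rcases lt_trichotomy (a k) 0 with hk | hk | hk
        · rw [fm_lb hk]
          exact Finset.le_sup' (f := fun k => -(g k q) / a k) ((hmemN k).mpr hk)
        · rw [hk, zero_mul, zero_add]; exact hzero k hk
        · exact absurd ⟨k, (hmemP k).mpr hk⟩ hP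
      · refine ⟨0, fun k => ?_⟩
        rcases lt_trichotomy (a k) 0 with hk | hk | hk
        · exact absurd ⟨k, (hmemN k).mpr hk⟩ hN
        · rw [hk, zero_mul, zero_add]; exact hzero k hk
        · exact absurd ⟨k, (hmemP k).mpr hk⟩ hP

/-- Fourier–Motzkin: projecting out finitely many variables from a finite
linear inequality system yields a finite linear inequality system. -/
private lemma fm_proj {P : Type} [AddCommGroup P] [Module ℝ P] (m : ℕ) :
    ∀ (ι : Type) [Fintype ι] (G : ι → ((Fin m → ℝ) →ₗ[ℝ] ℝ)) (g : ι → P →ₗ[ℝ] ℝ),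
      ∃ (κ : Type) (_ : Fintype κ) (h : κ → P →ₗ[ℝ] ℝ),
        ∀ p : P, (∃ f : Fin m → ℝ, ∀ k, G k f + g k p ≤ 0) ↔ (∀ j, h j p ≤ 0) := by
  induction m with
  | zero =>
    intro ι _ G g
    refine ⟨ι, inferInstance, g, fun p => ?_⟩
    constructor
    · rintro ⟨f, hf⟩ k
      have h1 := hf k
      have hz : G k f = 0 := by
        rw [Subsingleton.elim f 0, map_zero]
      linarith
    · intro hk
      exact ⟨0, fun k => by rw [map_zero, zero_add]; exact hk k⟩
  | succ m ih =>
    intro ι _ G g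
    -- the linear map `x ↦ Fin.cons 0 x`
    have cons0_add : ∀ x y : Fin m → ℝ,
        (Fin.cons 0 (x + y) : Fin (m+1) → ℝ) = Fin.cons 0 x + Fin.cons 0 y := by
      intro x y; funext i
      refine Fin.cases ?_ (fun i => ?_) i <;> simp
    have cons0_smul : ∀ (r : ℝ) (x : Fin m → ℝ),
        (Fin.cons 0 (r • x) : Fin (m+1) → ℝ) = r • (Fin.cons 0 x : Fin (m+1) → ℝ) := by
      intro r x; funext i
      refine Fin.cases ?_ (fun i => ?_) i <;> simp
    let cons0 : (Fin m → ℝ) →ₗ[ℝ] (Fin (m+1) → ℝ) :=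
      { toFun := fun x => (Fin.cons 0 x : Fin (m+1) → ℝ)
        map_add' := cons0_add
        map_smul' := fun r x => by simpa using cons0_smul r x }
    have hcons : ∀ (s : ℝ) (x : Fin m → ℝ),
        (Fin.cons s x : Fin (m+1) → ℝ) = s • (Fin.cons 1 0 : Fin (m+1) → ℝ) + Fin.cons 0 x := by
      intro s x; funext i
      refine Fin.cases ?_ (fun i => ?_) i <;> simp
    let a : ι → ℝ := fun k => G k (Fin.cons 1 0)
    have hdecomp : ∀ (k : ι) (s : ℝ) (x : Fin m → ℝ),
        G k (Fin.cons s x) = a k * s + G k (cons0 x) := by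
      intro k s x
      rw [hcons s x, map_add, _root_.map_smul, smul_eq_mul]
      simp only [cons0, LinearMap.coe_mk, AddHom.coe_mk, a]
      ring
    let GP : ι → ((Fin m → ℝ) × P) →ₗ[ℝ] ℝ :=
      fun k => ((G k).comp cons0).comp (LinearMap.fst ℝ _ _) + (g k).comp (LinearMap.snd ℝ _ _)
    obtain ⟨h, hh⟩ := fm_one a GP
    obtain ⟨κ, hκ, h', hh'⟩ := ih (ι ⊕ ι × ι)
      (fun j => (h j).comp (LinearMap.inl ℝ _ _)) (fun j => (h j).comp (LinearMap.inr ℝ _ _))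
    have hsplit : ∀ (j : ι ⊕ ι × ι) (x : Fin m → ℝ) (pp : P),
        h j (x, pp) = h j (x, 0) + h j (0, pp) := by
      intro j x pp
      rw [← map_add]
      simp
    refine ⟨κ, hκ, h', fun p => ?_⟩
    rw [← hh' p]
    constructor
    · rintro ⟨f, hf⟩
      refine ⟨Fin.tail f, fun j => ?_⟩
      have key : ∀ j, h j (Fin.tail f, p) ≤ 0 := by
        rw [← hh (Fin.tail f, p)]
        refine ⟨f 0, fun k => ?_⟩
        have h1 := hf k
        rw [← Fin.cons_self_tail f, hdecomp k (f 0) (Fin.tail f)] at h1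
        simp only [GP, LinearMap.add_apply, LinearMap.comp_apply, LinearMap.fst_apply,
          LinearMap.snd_apply]
        linarith
      simp only [LinearMap.comp_apply, LinearMap.inl_apply, LinearMap.inr_apply]
      have := key j
      rw [hsplit j (Fin.tail f) p] at this
      exact this
    · rintro ⟨x, hx⟩
      have key : ∀ j, h j (x, p) ≤ 0 := by
        intro j
        rw [hsplit j x p]
        have := hx j
        simpa only [LinearMap.comp_apply, LinearMap.inl_apply, LinearMap.inr_apply] using this
      obtain ⟨s, hs⟩ := (hh (x, p)).mpr key
      refine ⟨Fin.cons s x, fun k => ?_⟩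
      have h1 := hs k
      simp only [GP, LinearMap.add_apply, LinearMap.comp_apply, LinearMap.fst_apply,
        LinearMap.snd_apply] at h1
      rw [hdecomp k s x]
      linarith


/-- If `c : ℝ → ℝⁿ` is continuous and for every `t` the linear
program `inf { wᵀ f : A f ≤ c t }` is feasible with finite, attained optimal
value, then the optimal value is a continuous function of `t`. -/
theorem lp_value_continuous_in_constraints {n m : ℕ}
    (A : Matrix (Fin n) (Fin m) ℝ) (w : Fin m → ℝ)
    (c : ℝ → Fin n → ℝ) (hc : Continuous c)
    (hatt : ∀ t : ℝ, ∃ v : ℝ,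
      IsLeast {v : ℝ | ∃ f : Fin m → ℝ,
        (∀ i, A.mulVec f i ≤ c t i) ∧ v = w ⬝ᵥ f} v) :
    Continuous (fun t : ℝ => sInf {v : ℝ | ∃ f : Fin m → ℝ,
      (∀ i, A.mulVec f i ≤ c t i) ∧ v = w ⬝ᵥ f}) := by
  classical
  choose M hM using hatt
  -- the linear functional `f ↦ w ⬝ᵥ f`
  let wL : (Fin m → ℝ) →ₗ[ℝ] ℝ :=
    { toFun := fun f => w ⬝ᵥ f
      map_add' := fun x y => by
        simp [dotProduct, mul_add, Finset.sum_add_distrib]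
      map_smul' := fun r x => by
        simp [dotProduct, Finset.mul_sum, mul_comm, mul_left_comm] }
  let G : (Fin n ⊕ Unit) → (Fin m → ℝ) →ₗ[ℝ] ℝ :=
    Sum.elim (fun i => (LinearMap.proj i).comp A.mulVecLin) (fun _ => wL)
  let g : (Fin n ⊕ Unit) → ((Fin n → ℝ) × ℝ) →ₗ[ℝ] ℝ :=
    Sum.elim (fun i => -((LinearMap.proj i).comp (LinearMap.fst ℝ _ _)))
      (fun _ => -(LinearMap.snd ℝ (Fin n → ℝ) ℝ))
  obtain ⟨κ, hκ, h, hkey⟩ := fm_proj m (Fin n ⊕ Unit) G g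
  haveI := hκ
  -- translate the abstract system back
  have key : ∀ (b : Fin n → ℝ) (v : ℝ),
      (∃ f, (∀ i, A.mulVec f i ≤ b i) ∧ w ⬝ᵥ f ≤ v) ↔ ∀ j, h j (b, v) ≤ 0 := by
    intro b v
    rw [← hkey (b, v)]
    refine exists_congr fun f => ?_
    constructor
    · rintro ⟨h1, h2⟩ k
      match k with
      | Sum.inl i =>
        simp only [G, g, Sum.elim_inl, LinearMap.comp_apply, LinearMap.proj_apply,
          Matrix.mulVecLin_apply, LinearMap.neg_apply, LinearMap.fst_apply]
        linarith [h1 i]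
      | Sum.inr _ =>
        simp only [G, g, Sum.elim_inr, LinearMap.neg_apply, LinearMap.snd_apply, wL,
          LinearMap.coe_mk, AddHom.coe_mk]
        change w ⬝ᵥ f + -v ≤ 0
        linarith
    · intro hk
      constructor
      · intro i
        have := hk (Sum.inl i)
        simp only [G, g, Sum.elim_inl, LinearMap.comp_apply, LinearMap.proj_apply,
          Matrix.mulVecLin_apply, LinearMap.neg_apply, LinearMap.fst_apply] at this
        linarith
      · have := hk (Sum.inr ())
        simp only [G, g, Sum.elim_inr, LinearMap.neg_apply, LinearMap.snd_apply, wL,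
          LinearMap.coe_mk, AddHom.coe_mk] at this
        change w ⬝ᵥ f + -v ≤ 0 at this
        linarith
  -- the slice over the curve is exactly `[M t, ∞)`
  have slice : ∀ (t : ℝ) (v : ℝ), (∀ j, h j (c t, v) ≤ 0) ↔ M t ≤ v := by
    intro t v
    constructor
    · intro hv
      obtain ⟨f, hf1, hf2⟩ := (key (c t) v).mpr hv
      have := (hM t).2 ⟨f, hf1, rfl⟩
      linarith
    · intro hv
      obtain ⟨f, hf1, hf2⟩ := (hM t).1
      exact (key (c t) v).mp ⟨f, hf1, by rw [← hf2]; exact hv⟩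
  have hα : ∀ (j : κ) (b : Fin n → ℝ) (v : ℝ),
      h j (b, v) = h j (b, 0) + v * h j (0, 1) := by
    intro j b v
    have e : (b, v) = ((b, (0:ℝ)) + v • ((0 : Fin n → ℝ), (1:ℝ))) := by
      simp [Prod.ext_iff]
    rw [e, map_add, _root_.map_smul, smul_eq_mul]
  have hαle : ∀ j, h j (0, 1) ≤ 0 := by
    by_contra hcon
    push_neg at hcon
    obtain ⟨j, hj⟩ := hcon
    set v := max (M 0) ((1 - h j (c 0, 0)) / h j (0, 1)) with hv
    have h2 := (slice 0 v).mpr (le_max_left _ _) j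
    rw [hα] at h2
    have h3 : (1 - h j (c 0, 0)) / h j (0, 1) ≤ v := le_max_right _ _
    rw [div_le_iff₀ hj] at h3
    linarith
  set Jneg : Finset κ := Finset.univ.filter (fun j => h j (0, 1) < 0) with hJneg
  have hJmem : ∀ j, j ∈ Jneg ↔ h j (0, 1) < 0 := fun j => by rw [hJneg]; simp
  have hJ : Jneg.Nonempty := by
    by_contra hne
    have hz : ∀ j, h j (0, 1) = 0 := by
      intro j
      rcases lt_or_eq_of_le (hαle j) with h' | h'
      · exact absurd ⟨j, (hJmem j).mpr h'⟩ hne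
      · exact h'
    have h1 := (slice 0 (M 0)).mpr le_rfl
    have h2 : ∀ j, h j (c 0, M 0 - 1) ≤ 0 := by
      intro j
      have := h1 j
      rw [hα j, hz, mul_zero, add_zero] at this ⊢
      exact this
    have := (slice 0 (M 0 - 1)).mp h2
    linarith
  -- the value is a finite max of continuous functions
  have hMeq : ∀ t, M t = Jneg.sup' hJ (fun j => -(h j (c t, 0)) / h j (0, 1)) := by
    intro t
    apply le_antisymm
    · refine (slice t _).mp fun j => ?_
      rw [hα]
      rcases lt_or_eq_of_le (hαle j) with hlt | heq
      · have hle : -(h j (c t, 0)) / h j (0, 1) ≤ Jneg.sup' hJ _ :=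
          Finset.le_sup' (f := fun j => -(h j (c t, 0)) / h j (0, 1)) ((hJmem j).mpr hlt)
        have h2 : Jneg.sup' hJ (fun j => -(h j (c t, 0)) / h j (0, 1)) * h j (0, 1) ≤
            (-(h j (c t, 0)) / h j (0, 1)) * h j (0, 1) :=
          mul_le_mul_of_nonpos_right hle hlt.le
        rw [div_mul_cancel₀ _ hlt.ne] at h2
        linarith
      · have h0 := (slice t (M t)).mpr le_rfl j
        rw [hα j, heq, mul_zero, add_zero] at h0
        rw [heq, mul_zero, add_zero]
        exact h0
    · refine Finset.sup'_le _ _ fun j hjin => ?_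
      have hlt : h j (0, 1) < 0 := (hJmem j).mp hjin
      have := (slice t (M t)).mpr le_rfl j
      rw [hα] at this
      rw [div_le_iff_of_neg hlt]
      linarith
  have hfun : (fun t : ℝ => sInf {v : ℝ | ∃ f : Fin m → ℝ,
      (∀ i, A.mulVec f i ≤ c t i) ∧ v = w ⬝ᵥ f}) =
      fun t => Jneg.sup' hJ (fun j => -(h j (c t, 0)) / h j (0, 1)) := by
    funext t
    rw [(hM t).csInf_eq, hMeq t]
  rw [hfun]
  refine Continuous.finset_sup'_apply hJ (fun j _ => ?_)
  have hcj : Continuous (h j) := (h j).continuous_of_finiteDimensional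
  exact ((hcj.comp (hc.prodMk continuous_const)).neg).div_const _
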